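/- If a graph G contains a ladder of length at least 2 (a 2×3 grid as induced subgraph attached to the rest of G only via its four cornerpoints) that is not disconnecting (the pair of horizontal edges of a square do not form an edge cut of G), then G contains a K4 minor, and hence the treewidth of G is at least 3. -/

import Mathlib

open SimpleGraph

/-- The ladder of length `k`: the `2 × (k+1)` grid graph. -/
def ladder (k : ℕ) : SimpleGraph (Fin 2 × Fin (k + 1)) :=
  SimpleGraph.fromRel fun p q =>
    (p.1 = q.1 ∧ p.2.val + 1 = q.2.val) ∨ (p.2 = q.2 ∧ p.1 ≠ q.1)

/-- `G` contains a ladder of length `k`: an induced copy of the `2 × (k+1)` grid,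
attached to the rest of `G` only via its four cornerpoints (the vertices in columns `0` and `k`). -/
structure ContainsLadder {V : Type} (G : SimpleGraph V) (k : ℕ) where
  f : Fin 2 × Fin (k + 1) → V
  inj : Function.Injective f
  induced : ∀ p q, G.Adj (f p) (f q) ↔ (ladder k).Adj p q
  attach : ∀ p : Fin 2 × Fin (k + 1), p.2.val ≠ 0 → p.2.val ≠ k →
    ∀ v : V, G.Adj (f p) v → v ∈ Set.range f

/-- The two horizontal edges of square `i` of the ladder form an edge cut of `G`. -/
def ContainsLadder.SquareCut {V : Type} {G : SimpleGraph V} {k : ℕ}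
    (L : ContainsLadder G k) (i : Fin k) : Prop :=
  ¬ (G.deleteEdges {s(L.f (0, i.castSucc), L.f (0, i.succ)),
      s(L.f (1, i.castSucc), L.f (1, i.succ))}).Connected

/-- The ladder is disconnecting: the horizontal edges of some square form an edge cut. -/
def ContainsLadder.Disconnects {V : Type} {G : SimpleGraph V} {k : ℕ}
    (L : ContainsLadder G k) : Prop :=
  ∃ i : Fin k, L.SquareCut i

/-- A tree decomposition of a graph. -/
structure TreeDecomp {V : Type} (G : SimpleGraph V) where
  ι : Type
  [fin : Fintype ι]
  tree : SimpleGraph ι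
  isTree : tree.IsTree
  bag : ι → Finset V
  cover_vertex : ∀ v : V, ∃ i, v ∈ bag i
  cover_edge : ∀ ⦃u v : V⦄, G.Adj u v → ∃ i, u ∈ bag i ∧ v ∈ bag i
  bag_connected : ∀ v : V, (tree.induce {i | v ∈ bag i}).Connected

/-- The width of a tree decomposition: maximum bag size minus one. -/
def TreeDecomp.width {V : Type} {G : SimpleGraph V} (td : TreeDecomp G) : ℕ :=
  letI := td.fin
  (Finset.univ.sup fun i => (td.bag i).card) - 1

/-- The treewidth of a graph: minimum width over all tree decompositions. -/
noncomputable def treewidth {V : Type} (G : SimpleGraph V) : ℕ :=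
  sInf (Set.range fun td : TreeDecomp G => td.width)

/-- `H` is a minor of `G`: witnessed by pairwise disjoint nonempty connected branch sets. -/
def IsMinor {W V : Type} (H : SimpleGraph W) (G : SimpleGraph V) : Prop :=
  ∃ φ : W → Set V, (∀ w, (φ w).Nonempty) ∧ (∀ w, (G.induce (φ w)).Connected) ∧
    (∀ w w', w ≠ w' → Disjoint (φ w) (φ w')) ∧
    (∀ w w', H.Adj w w' → ∃ u ∈ φ w, ∃ v ∈ φ w', G.Adj u v)

/-- Lengthen the ladder `L` by `m` squares, by inserting `m` new rungs between
columns `0` and `1` (subdividing the two horizontal edges and adding rungs). -/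
def extendLadder {V : Type} (G : SimpleGraph V) {k : ℕ} (L : ContainsLadder G k) (m : ℕ) :
    SimpleGraph (V ⊕ (Fin 2 × Fin m)) :=
  SimpleGraph.fromRel fun p q =>
    (∃ u v : V, p = Sum.inl u ∧ q = Sum.inl v ∧ G.Adj u v ∧
      (m ≠ 0 → ∀ a : Fin 2, s(u, v) ≠ s(L.f (a, 0), L.f (a, 1)))) ∨
    (∃ (a : Fin 2) (j : Fin m), j.val = 0 ∧ p = Sum.inl (L.f (a, 0)) ∧ q = Sum.inr (a, j)) ∨
    (∃ (a : Fin 2) (j : Fin m), j.val = m - 1 ∧ p = Sum.inr (a, j) ∧ q = Sum.inl (L.f (a, 1))) ∨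
    (∃ (a : Fin 2) (j j' : Fin m), j.val + 1 = j'.val ∧ p = Sum.inr (a, j) ∧ q = Sum.inr (a, j')) ∨
    (∃ (a b : Fin 2) (j : Fin m), a ≠ b ∧ p = Sum.inr (a, j) ∧ q = Sum.inr (b, j))

/-- Insert one new rung into square `i` of the ladder `L`: two new vertices `inr 0, inr 1`
subdividing the horizontal edges of square `i`, joined by an edge. -/
def insertRung {V : Type} (G : SimpleGraph V) {k : ℕ} (L : ContainsLadder G k) (i : Fin k) :
    SimpleGraph (V ⊕ Fin 2) :=
  SimpleGraph.fromRel fun p q =>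
    (∃ u v : V, p = Sum.inl u ∧ q = Sum.inl v ∧ G.Adj u v ∧
      ∀ a : Fin 2, s(u, v) ≠ s(L.f (a, i.castSucc), L.f (a, i.succ))) ∨
    (∃ a : Fin 2, p = Sum.inl (L.f (a, i.castSucc)) ∧ q = Sum.inr a) ∨
    (∃ a : Fin 2, p = Sum.inr a ∧ q = Sum.inl (L.f (a, i.succ))) ∨
    (p = Sum.inr (0 : Fin 2) ∧ q = Sum.inr (1 : Fin 2))

/-- Contract the edge `{u, v}` of `G`: merge `v` into `u`. -/
def contractEdge {V : Type} (G : SimpleGraph V) (u v : V) : SimpleGraph {x : V // x ≠ v} :=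
  SimpleGraph.fromRel fun x y =>
    G.Adj x.val y.val ∨ (x.val = u ∧ G.Adj v y.val) ∨ (y.val = u ∧ G.Adj x.val v)

/-- Subdivide the edge `{u, v}` of `G` with a new vertex. -/
def subdivide {V : Type} (G : SimpleGraph V) (u v : V) : SimpleGraph (V ⊕ Unit) :=
  SimpleGraph.fromRel fun p q =>
    (∃ x y : V, p = Sum.inl x ∧ q = Sum.inl y ∧ G.Adj x y ∧ s(x, y) ≠ s(u, v)) ∨
    (p = Sum.inl u ∧ q = Sum.inr ()) ∨ (p = Sum.inl v ∧ q = Sum.inr ())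

/-- Suppress the degree-2 vertex `v` with neighbours `a` and `b`:
delete `v` and add the edge `{a, b}` (if not already present). -/
def suppress {V : Type} (G : SimpleGraph V) (v a b : V) : SimpleGraph {x : V // x ≠ v} :=
  SimpleGraph.fromRel fun x y =>
    G.Adj x.val y.val ∨ (x.val = a ∧ y.val = b)

/-- A graph is chordal if every cycle on at least 4 vertices has a chord. -/
def IsChordal {V : Type} (G : SimpleGraph V) : Prop :=
  ∀ n : ℕ, ∀ f : Fin (n + 4) → V, Function.Injective f →
    (∀ i : Fin (n + 4), G.Adj (f i) (f (i + 1))) →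
    ∃ i j : Fin (n + 4), i ≠ j ∧ j ≠ i + 1 ∧ i ≠ j + 1 ∧ G.Adj (f i) (f j)

/-- The induced subgraph on `S` has no cutvertex. -/
def NoCutvertex {V : Type} (G : SimpleGraph V) (S : Set V) : Prop :=
  ∀ v ∈ S, ∀ x y : ↥(S \ {v}), (G.induce (S \ {v})).Reachable x y

/-- `S` is a block (biconnected component) of `G`: a maximal connected
vertex set without a cutvertex. -/
def IsBlock {V : Type} (G : SimpleGraph V) (S : Set V) : Prop :=
  S.Nonempty ∧ (G.induce S).Connected ∧ NoCutvertex G S ∧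
  ∀ T : Set V, S ⊆ T → (G.induce T).Connected → NoCutvertex G T → T = S


section Generic
variable {ι : Type} {t : SimpleGraph ι}

/-- Walk hitting a target set for the first time. -/
lemma walk_firstHit {T : Set ι} : ∀ {a b : ι} (p : t.Walk a b), a ∉ T → b ∈ T →
    ∃ c ∈ T, ∃ d, d ∉ T ∧ t.Adj d c ∧ ∃ q : t.Walk a d, ∀ v ∈ q.support, v ∉ T := by
  intro a b p
  induction p with
  | nil => intro ha hb; exact absurd hb ha
  | @cons u x b h p ih =>
    intro ha hb
    by_cases hx : x ∈ T
    · exact ⟨x, hx, u, ha, h, Walk.nil, by simp [ha]⟩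
    · obtain ⟨c, hc, d, hd, hadj, q, hq⟩ := ih hx hb
      exact ⟨c, hc, d, hd, hadj, Walk.cons h q, by
        intro v hv
        rw [Walk.support_cons, List.mem_cons] at hv
        rcases hv with rfl | hv
        · exact ha
        · exact hq v hv⟩

/-- Split a walk at the first vertex lying in `T` (given the end lies in `T`). -/
lemma walk_split {T : Set ι} : ∀ {a b : ι} (p : t.Walk a b), b ∈ T →
    ∃ (m : ι), m ∈ T ∧ ∃ (q : t.Walk a m) (r : t.Walk m b),
      p = q.append r ∧ ∀ v ∈ q.support, v ∈ T → v = m := by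
  intro a b p
  induction p with
  | nil => intro hb; exact ⟨_, hb, Walk.nil, Walk.nil, rfl, by intro v hv _; simpa using hv⟩
  | @cons u x b h p ih =>
    intro hb
    by_cases hu : u ∈ T
    · exact ⟨u, hu, Walk.nil, Walk.cons h p, rfl, by simp⟩
    · obtain ⟨m, hm, q, r, hqr, hq⟩ := ih hb
      refine ⟨m, hm, Walk.cons h q, r, by rw [Walk.cons_append, hqr], ?_⟩
      intro v hv hvT
      rw [Walk.support_cons, List.mem_cons] at hv
      rcases hv with rfl | hv
      · exact absurd hvT hu
      · exact hq v hv hvT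

/-- A walk whose support lies in `S` gives reachability in the induced graph. -/
lemma reach_of_walk_support {S : Set ι} : ∀ {a b : ι} (p : t.Walk a b)
    (hp : ∀ v ∈ p.support, v ∈ S),
    (t.induce S).Reachable ⟨a, hp a p.start_mem_support⟩ ⟨b, hp b p.end_mem_support⟩ := by
  intro a b p
  induction p with
  | nil => intro hp; rfl
  | @cons u x b h p ih =>
    intro hp
    have hx : ∀ v ∈ p.support, v ∈ S := fun v hv => hp v (by simp [hv])
    have h1 : (t.induce S).Adj ⟨u, hp u (by simp)⟩ ⟨x, hx x p.start_mem_support⟩ := h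
    exact (h1.reachable).trans (ih hx)

/-- Reachability in an induced subgraph is monotone in the vertex set. -/
lemma reach_induce_mono {S S' : Set ι} (hss : S ⊆ S') {a b : ↥S}
    (h : (t.induce S).Reachable a b) :
    (t.induce S').Reachable ⟨a.1, hss a.2⟩ ⟨b.1, hss b.2⟩ :=
  h.map (t.induceHomOfLE hss).toHom

/-- In an induced-connected set, any two vertices are joined by a path inside the set. -/
lemma exists_path_in_set {S : Set ι} (hS : (t.induce S).Connected) {x y : ι}
    (hx : x ∈ S) (hy : y ∈ S) :
    ∃ p : t.Walk x y, p.IsPath ∧ ∀ v ∈ p.support, v ∈ S := by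
  classical
  obtain ⟨w⟩ := hS ⟨x, hx⟩ ⟨y, hy⟩
  let hm := w.map (SimpleGraph.Hom.comap Subtype.val t)
  refine ⟨(hm.toPath.1 : t.Walk x y), hm.toPath.2, fun v hv => ?_⟩
  have h2 : v ∈ hm.support := Walk.support_toPath_subset hm hv
  rw [show hm.support = w.support.map (SimpleGraph.Hom.comap Subtype.val t) from Walk.support_map _ _] at h2
  obtain ⟨⟨u, hu⟩, _, rfl⟩ := List.mem_map.mp h2
  exact hu

/-- Helly property for three connected subsets of a tree. -/
lemma tree_helly3 (ht : t.IsTree) {S1 S2 S3 : Set ι}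
    (h1 : (t.induce S1).Connected) (h2 : (t.induce S2).Connected)
    (h3 : (t.induce S3).Connected)
    (h12 : (S1 ∩ S2).Nonempty) (h13 : (S1 ∩ S3).Nonempty) (h23 : (S2 ∩ S3).Nonempty) :
    (S1 ∩ S2 ∩ S3).Nonempty := by
  obtain ⟨a, ha2, ha3⟩ := h23
  obtain ⟨b, hb1, hb3⟩ := h13
  obtain ⟨c, hc1, hc2⟩ := h12
  obtain ⟨p, hpP, hpS⟩ := exists_path_in_set h1 hb1 hc1
  obtain ⟨q, hqP, hqS⟩ := exists_path_in_set h3 ha3 hb3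
  obtain ⟨r, hrP, hrS⟩ := exists_path_in_set h2 ha2 hc2
  obtain ⟨m, hm, q₁, q₂, hq12, hfirst⟩ :=
    walk_split (T := {v | v ∈ p.support}) q p.start_mem_support
  classical
  have hm' : m ∈ p.support := hm
  set p₂ := p.dropUntil m hm' with hp₂
  have hp₂P : p₂.IsPath := hpP.dropUntil hm'
  have hq₁P : q₁.IsPath := by
    rw [hq12] at hqP; exact hqP.of_append_left
  -- the appended walk is a path
  have hwP : (q₁.append p₂).IsPath := by
    rw [Walk.isPath_def, Walk.support_append, List.nodup_append]
    refine ⟨hq₁P.support_nodup, hp₂P.support_nodup.tail, ?_⟩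
    intro v hv v' hv' hvv'
    subst hvv'
    have hvp : v ∈ p.support := Walk.support_dropUntil_subset p hm' (List.mem_of_mem_tail hv')
    have : v = m := hfirst v hv hvp
    subst this
    have := hp₂P.support_nodup
    rw [p₂.support_eq_cons] at this
    exact this.notMem hv'
  -- uniqueness of paths in a tree
  have huniq := ht.existsUnique_path a c
  have := huniq.unique hwP hrP
  have hmr : m ∈ r.support := by
    rw [← this, Walk.support_append]
    exact List.mem_append_left _ q₁.end_mem_support
  refine ⟨m, ⟨hpS m hm', hrS m hmr⟩, ?_⟩
  have : m ∈ q.support := by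
    rw [hq12, Walk.support_append]
    exact List.mem_append_left _ q₁.end_mem_support
  exact hqS m this

/-- Intersection of two connected subsets of a tree is connected. -/
lemma tree_inter_connected (ht : t.IsTree) {S1 S2 : Set ι}
    (h1 : (t.induce S1).Connected) (h2 : (t.induce S2).Connected)
    (h12 : (S1 ∩ S2).Nonempty) : (t.induce (S1 ∩ S2)).Connected := by
  rw [connected_iff]
  refine ⟨?_, h12.to_subtype⟩
  rintro ⟨x, hx1, hx2⟩ ⟨y, hy1, hy2⟩
  obtain ⟨p, hpP, hpS⟩ := exists_path_in_set h1 hx1 hy1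
  obtain ⟨r, hrP, hrS⟩ := exists_path_in_set h2 hx2 hy2
  have := (ht.existsUnique_path x y).unique hpP hrP
  subst this
  have hsub : ∀ v ∈ p.support, v ∈ S1 ∩ S2 := fun v hv => ⟨hpS v hv, hrS v hv⟩
  exact reach_of_walk_support p hsub

lemma induce_singleton_connected {V : Type} (G : SimpleGraph V) (x : V) :
    (G.induce {x}).Connected := by
  rw [connected_iff]
  refine ⟨fun a b => ?_, ⟨⟨x, rfl⟩⟩⟩
  have : a = b := Subtype.ext (a.2.trans b.2.symm)
  rw [this]

lemma induce_mono_graph {V : Type} {G G' : SimpleGraph V} (h : G' ≤ G) {S : Set V}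
    (hc : (G'.induce S).Connected) : (G.induce S).Connected :=
  hc.mono (fun _ _ hadj => h hadj)

lemma ladder_k4_minor {V : Type} (G : SimpleGraph V) (hG : G.Connected)
    {k : ℕ} (hk : 2 ≤ k) (L : ContainsLadder G k) (hL : ¬ L.Disconnects) :
    IsMinor (⊤ : SimpleGraph (Fin 4)) G := by
  classical
  let c0 : Fin (k+1) := ⟨0, by omega⟩
  let c1 : Fin (k+1) := ⟨1, by omega⟩
  let c2 : Fin (k+1) := ⟨2, by omega⟩
  -- adjacency in `G` along the ladder
  have adjf : ∀ (a b : Fin 2) (j j' : Fin (k+1)),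
      (a = b ∧ j.val + 1 = j'.val) ∨ (j = j' ∧ a ≠ b) →
      G.Adj (L.f (a, j)) (L.f (b, j')) := by
    intro a b j j' h
    rw [L.induced, ladder, SimpleGraph.fromRel_adj]
    constructor
    · intro he
      rcases h with ⟨rfl, hv⟩ | ⟨rfl, hab⟩
      · have := congrArg (fun p => (Prod.snd p).val) he
        simp at this; omega
      · exact hab (congrArg Prod.fst he)
    · exact Or.inl h
  have hne : ∀ {a b : Fin 2} {j j' : Fin (k+1)}, (a, j) ≠ (b, j') →
      L.f (a, j) ≠ L.f (b, j') := fun h he => h (L.inj he)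
  have hprod : ∀ {a b : Fin 2} {j j' : Fin (k+1)}, a ≠ b ∨ j.val ≠ j'.val →
      (a, j) ≠ (b, j') := by
    intro a b j j' h heq
    rcases h with h | h
    · exact h (congrArg Prod.fst heq)
    · exact h (congrArg (fun p => (Prod.snd p).val) heq)
  -- names for the six relevant ladder vertices
  set fA := L.f (0, c1) with hfA
  set fB := L.f (1, c1) with hfB
  set fC0 := L.f (0, c0) with hfC0
  set fC1 := L.f (1, c0) with hfC1
  set fD0 := L.f (0, c2) with hfD0
  set fD1 := L.f (1, c2) with hfD1
  have hAB : G.Adj fA fB := adjf 0 1 c1 c1 (Or.inr ⟨rfl, by decide⟩)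
  have hC0A : G.Adj fC0 fA := adjf 0 0 c0 c1 (Or.inl ⟨rfl, rfl⟩)
  have hC1B : G.Adj fC1 fB := adjf 1 1 c0 c1 (Or.inl ⟨rfl, rfl⟩)
  have hAD : G.Adj fA fD0 := adjf 0 0 c1 c2 (Or.inl ⟨rfl, rfl⟩)
  have hBD : G.Adj fB fD1 := adjf 1 1 c1 c2 (Or.inl ⟨rfl, rfl⟩)
  have hCC : G.Adj fC0 fC1 := adjf 0 1 c0 c0 (Or.inr ⟨rfl, by decide⟩)
  have hDD : G.Adj fD0 fD1 := adjf 0 1 c2 c2 (Or.inr ⟨rfl, by decide⟩)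
  -- the graph with one square's horizontal edges removed is connected
  have hL' : ∀ i, ¬ L.SquareCut i := fun i hi => hL ⟨i, hi⟩
  have hGc := not_not.mp (hL' ⟨1, by omega⟩)

  have hGc' : (G.deleteEdges ({s(fA, fD0), s(fB, fD1)} : Set (Sym2 V))).Connected := hGc
  set G' := G.deleteEdges ({s(fA, fD0), s(fB, fD1)} : Set (Sym2 V)) with hG'def
  have hle : G' ≤ G := by rw [hG'def]; exact SimpleGraph.deleteEdges_le _
  -- neighbours of a middle-column vertex
  have attach1 : ∀ (a : Fin 2) (v : V), G.Adj (L.f (a, c1)) v →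
      v = L.f (a, c0) ∨ v = L.f (a, c2) ∨ ∃ b, b ≠ a ∧ v = L.f (b, c1) := by
    intro a v hv
    obtain ⟨p, rfl⟩ := L.attach (a, c1) (by omega : (1:ℕ) ≠ 0) (by omega : (1:ℕ) ≠ k) v hv
    have hlad := (L.induced _ p).mp hv
    rw [ladder, SimpleGraph.fromRel_adj] at hlad
    obtain ⟨b, j⟩ := p
    rcases hlad.2 with (⟨h1, h2⟩ | ⟨h1, h2⟩) | (⟨h1, h2⟩ | ⟨h1, h2⟩)
    · simp only at h1 h2
      subst h1
      right; left
      congr 1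
      have : j = c2 := Fin.ext (by simpa [c1, c2] using h2.symm)
      rw [this]
    · simp only at h1 h2
      exact Or.inr (Or.inr ⟨b, Ne.symm h2, by rw [h1]⟩)
    · simp only at h1 h2
      subst h1
      left
      congr 1
      have : j = c0 := Fin.ext (by simp [c0, c1] at h2 ⊢; omega)
      rw [this]
    · simp only at h1 h2
      exact Or.inr (Or.inr ⟨b, h2, by rw [← h1]⟩)
  -- neighbours of `fA` and `fB` in `G'`
  have nbrA : ∀ v : V, G'.Adj fA v → v = fC0 ∨ v = fB := by
    intro v hv
    rw [hG'def, SimpleGraph.deleteEdges_adj] at hv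
    obtain ⟨hv1, hv2⟩ := hv
    rcases attach1 0 v hv1 with h | h | ⟨b, hb, h⟩
    · exact Or.inl h
    · exact absurd (by rw [h]; exact Set.mem_insert _ _) hv2
    · right
      rw [h, hfB]
      congr 2
      omega
  have nbrB : ∀ v : V, G'.Adj fB v → v = fC1 ∨ v = fA := by
    intro v hv
    rw [hG'def, SimpleGraph.deleteEdges_adj] at hv
    obtain ⟨hv1, hv2⟩ := hv
    rcases attach1 1 v hv1 with h | h | ⟨b, hb, h⟩
    · exact Or.inl h
    · exact absurd (by rw [h]; exact Set.mem_insert_of_mem _ rfl) hv2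
    · right
      rw [h, hfA]
      congr 2
      omega
  -- the first-hit walk from the far side of the square back to column 0
  set T : Set V := {fC0, fC1, fA, fB} with hT
  have hc12 : (c1 : Fin (k+1)) ≠ c2 := Fin.ne_of_val_ne (by simp [c1, c2])
  have hc02 : (c0 : Fin (k+1)) ≠ c2 := Fin.ne_of_val_ne (by simp [c0, c2])
  have hc01 : (c0 : Fin (k+1)) ≠ c1 := Fin.ne_of_val_ne (by simp [c0, c1])
  have hD0T : fD0 ∉ T := by
    rw [hT]
    simp only [Set.mem_insert_iff, Set.mem_singleton_iff, not_or]
    exact ⟨hne (hprod (Or.inr (by simp [c0, c2]))), hne (hprod (Or.inl (by decide))),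
      hne (hprod (Or.inr (by simp [c1, c2]))), hne (hprod (Or.inl (by decide)))⟩
  have hC0T : fC0 ∈ T := by rw [hT]; exact Set.mem_insert _ _
  obtain ⟨wk⟩ := hGc'.preconnected fD0 fC0
  obtain ⟨c, hcT, d, hdT, hdc, q, hq⟩ := walk_firstHit (t := G') wk hD0T hC0T
  -- the first vertex hit is in column 0
  have hcC : c = fC0 ∨ c = fC1 := by
    rw [hT] at hcT
    simp only [Set.mem_insert_iff, Set.mem_singleton_iff] at hcT
    rcases hcT with h | h | h | h
    · exact Or.inl h
    · exact Or.inr h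
    · subst h
      rcases nbrA d hdc.symm with h | h
      · exact absurd (by rw [hT, h]; exact Set.mem_insert _ _) hdT
      · exact absurd (by rw [hT, h]; simp) hdT
    · subst h
      rcases nbrB d hdc.symm with h | h
      · exact absurd (by rw [hT, h]; simp) hdT
      · exact absurd (by rw [hT, h]; simp) hdT
  -- the four branch sets
  set SD : Set V := {fD1, fD0} ∪ {v | v ∈ q.support} with hSD
  have hsupT : ∀ v ∈ q.support, v ∉ T := hq
  have hD0S : fD0 ∈ SD := by rw [hSD]; exact Or.inl (by simp)
  have hD1S : fD1 ∈ SD := by rw [hSD]; exact Or.inl (by simp)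
  have hdS : d ∈ SD := by rw [hSD]; exact Or.inr q.end_mem_support
  refine ⟨![{fA}, {fB}, {fC0, fC1}, SD], ?_, ?_, ?_, ?_⟩
  · intro w
    fin_cases w
    · exact ⟨fA, rfl⟩
    · exact ⟨fB, rfl⟩
    · exact ⟨fC0, Or.inl rfl⟩
    · exact ⟨fD0, hD0S⟩
  · intro w
    fin_cases w
    · exact induce_singleton_connected G fA
    · exact induce_singleton_connected G fB
    · exact induce_pair_connected_of_adj hCC
    · show (G.induce SD).Connected
      rw [hSD]
      have hq' : (G'.induce {v | v ∈ q.support}).Connected := by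
        have := q.toSubgraph_connected.induce_verts
        rwa [q.verts_toSubgraph] at this
      refine induce_union_connected (induce_pair_connected_of_adj hDD.symm).preconnected
        (induce_mono_graph hle hq').preconnected ⟨fD0, by simp, q.start_mem_support⟩
  · -- disjointness
    have hfAq : fA ∉ {v | v ∈ q.support} := fun h => hsupT fA h (by rw [hT]; simp)
    have hfBq : fB ∉ {v | v ∈ q.support} := fun h => hsupT fB h (by rw [hT]; simp)
    have hfC0q : fC0 ∉ {v | v ∈ q.support} := fun h => hsupT fC0 h (by rw [hT]; simp)
    have hfC1q : fC1 ∉ {v | v ∈ q.support} := fun h => hsupT fC1 h (by rw [hT]; simp)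
    have hAB' : fA ≠ fB := hne (hprod (Or.inl (by decide)))
    have hAC0 : fA ≠ fC0 := hne (hprod (Or.inr (by simp [c0, c1])))
    have hAC1 : fA ≠ fC1 := hne (hprod (Or.inl (by decide)))
    have hAD0 : fA ≠ fD0 := hne (hprod (Or.inr (by simp [c1, c2])))
    have hAD1 : fA ≠ fD1 := hne (hprod (Or.inl (by decide)))
    have hBC0 : fB ≠ fC0 := hne (hprod (Or.inl (by decide)))
    have hBC1 : fB ≠ fC1 := hne (hprod (Or.inr (by simp [c0, c1])))
    have hBD0 : fB ≠ fD0 := hne (hprod (Or.inl (by decide)))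
    have hBD1 : fB ≠ fD1 := hne (hprod (Or.inr (by simp [c1, c2])))
    have hC0D0 : fC0 ≠ fD0 := hne (hprod (Or.inr (by simp [c0, c2])))
    have hC0D1 : fC0 ≠ fD1 := hne (hprod (Or.inl (by decide)))
    have hC1D0 : fC1 ≠ fD0 := hne (hprod (Or.inl (by decide)))
    have hC1D1 : fC1 ≠ fD1 := hne (hprod (Or.inr (by simp [c0, c2])))
    have hAS : fA ∉ SD := by
      rw [hSD]; rintro (h | h)
      · simp only [Set.mem_insert_iff, Set.mem_singleton_iff] at h
        rcases h with h | h
        · exact hAD1 h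
        · exact hAD0 h
      · exact hfAq h
    have hBS : fB ∉ SD := by
      rw [hSD]; rintro (h | h)
      · simp only [Set.mem_insert_iff, Set.mem_singleton_iff] at h
        rcases h with h | h
        · exact hBD1 h
        · exact hBD0 h
      · exact hfBq h
    have hC0S : fC0 ∉ SD := by
      rw [hSD]; rintro (h | h)
      · simp only [Set.mem_insert_iff, Set.mem_singleton_iff] at h
        rcases h with h | h
        · exact hC0D1 h
        · exact hC0D0 h
      · exact hfC0q h
    have hC1S : fC1 ∉ SD := by
      rw [hSD]; rintro (h | h)
      · simp only [Set.mem_insert_iff, Set.mem_singleton_iff] at h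
        rcases h with h | h
        · exact hC1D1 h
        · exact hC1D0 h
      · exact hfC1q h
    have dAB : Disjoint ({fA} : Set V) {fB} := Set.disjoint_singleton_left.mpr hAB'
    have dAC : Disjoint ({fA} : Set V) {fC0, fC1} :=
      Set.disjoint_singleton_left.mpr (by rintro (h | h); exacts [hAC0 h, hAC1 h])
    have dAD : Disjoint ({fA} : Set V) SD := Set.disjoint_singleton_left.mpr hAS
    have dBC : Disjoint ({fB} : Set V) {fC0, fC1} :=
      Set.disjoint_singleton_left.mpr (by rintro (h | h); exacts [hBC0 h, hBC1 h])
    have dBD : Disjoint ({fB} : Set V) SD := Set.disjoint_singleton_left.mpr hBS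
    have dCD : Disjoint ({fC0, fC1} : Set V) SD := by
      rw [Set.disjoint_left]; rintro x (rfl | rfl) h; exacts [hC0S h, hC1S h]
    intro w w' hww
    fin_cases w <;> fin_cases w'
    · exact absurd rfl hww
    · exact dAB
    · exact dAC
    · exact dAD
    · exact dAB.symm
    · exact absurd rfl hww
    · exact dBC
    · exact dBD
    · exact dAC.symm
    · exact dBC.symm
    · exact absurd rfl hww
    · exact dCD
    · exact dAD.symm
    · exact dBD.symm
    · exact dCD.symm
    · exact absurd rfl hww
  · intro w w' hww
    have hGdc : G.Adj d c := hle hdc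
    fin_cases w <;> fin_cases w'
    · simp at hww
    · exact ⟨fA, rfl, fB, rfl, hAB⟩
    · exact ⟨fA, rfl, fC0, Or.inl rfl, hC0A.symm⟩
    · exact ⟨fA, rfl, fD0, hD0S, hAD⟩
    · exact ⟨fB, rfl, fA, rfl, hAB.symm⟩
    · simp at hww
    · exact ⟨fB, rfl, fC1, Or.inr rfl, hC1B.symm⟩
    · exact ⟨fB, rfl, fD1, hD1S, hBD⟩
    · exact ⟨fC0, Or.inl rfl, fA, rfl, hC0A⟩
    · exact ⟨fC1, Or.inr rfl, fB, rfl, hC1B⟩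
    · simp at hww
    · rcases hcC with h | h
      · exact ⟨c, Or.inl h, d, hdS, hGdc.symm⟩
      · exact ⟨c, Or.inr h, d, hdS, hGdc.symm⟩
    · exact ⟨fD0, hD0S, fA, rfl, hAD.symm⟩
    · exact ⟨fD1, hD1S, fB, rfl, hBD.symm⟩
    · rcases hcC with h | h
      · exact ⟨d, hdS, c, Or.inl h, hGdc⟩
      · exact ⟨d, hdS, c, Or.inr h, hGdc⟩
    · simp at hww

section H4
variable {ι : Type} {t : SimpleGraph ι}
/-- Helly property for four connected subsets of a tree. -/
lemma tree_helly4 (ht : t.IsTree) {S : Fin 4 → Set ι}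
    (hc : ∀ w, (t.induce (S w)).Connected)
    (hp : ∀ w w', w ≠ w' → (S w ∩ S w').Nonempty) :
    ∃ m, ∀ w, m ∈ S w := by
  have h12 : (S 0 ∩ S 1).Nonempty := hp 0 1 (by decide)
  have hT : (t.induce (S 0 ∩ S 1)).Connected :=
    tree_inter_connected ht (hc 0) (hc 1) h12
  have hT3 : ((S 0 ∩ S 1) ∩ S 2).Nonempty :=
    tree_helly3 ht (hc 0) (hc 1) (hc 2) h12 (hp 0 2 (by decide)) (hp 1 2 (by decide))
  have hT4 : ((S 0 ∩ S 1) ∩ S 3).Nonempty :=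
    tree_helly3 ht (hc 0) (hc 1) (hc 3) h12 (hp 0 3 (by decide)) (hp 1 3 (by decide))
  obtain ⟨m, ⟨⟨hm0, hm1⟩, hm2⟩, hm3⟩ :=
    tree_helly3 ht hT (hc 2) (hc 3) hT3 hT4 (hp 2 3 (by decide))
  refine ⟨m, fun w => ?_⟩
  fin_cases w <;> assumption


end H4

section AuxMain

/-- The trivial tree decomposition with a single bag. -/
noncomputable def trivialTD {V : Type} [Fintype V] (G : SimpleGraph V) : TreeDecomp G where
  ι := Unit
  tree := ⊥
  isTree := by
    constructor
    · rw [connected_iff]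
      exact ⟨fun x y => by rw [Subsingleton.elim x y], ⟨()⟩⟩
    · intro v c hc
      cases c with
      | nil => exact hc.ne_nil rfl
      | cons h _ => exact h.elim
  bag := fun _ => Finset.univ
  cover_vertex := fun v => ⟨(), Finset.mem_univ v⟩
  cover_edge := fun u v _ => ⟨(), Finset.mem_univ u, Finset.mem_univ v⟩
  bag_connected := fun v => by
    rw [connected_iff]
    refine ⟨fun x y => by rw [Subsingleton.elim x y], ⟨⟨(), Finset.mem_univ v⟩⟩⟩

/-- Any tree decomposition of a graph with a `K₄` minor has width at least 3. -/
lemma TreeDecomp.three_le_width {V : Type} {G : SimpleGraph V} (td : TreeDecomp G)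
    (h : IsMinor (⊤ : SimpleGraph (Fin 4)) G) : 3 ≤ td.width := by
  classical
  obtain ⟨φ, hne, hcn, hdis, hadj⟩ := h
  set Sw : Fin 4 → Set td.ι := fun w => {i | ∃ v ∈ φ w, v ∈ td.bag i} with hSw
  -- each `Sw w` induces a connected subgraph of the tree
  have hconn : ∀ w, (td.tree.induce (Sw w)).Connected := by
    intro w
    have key : ∀ {x y : V} (p : G.Walk x y), (∀ z ∈ p.support, z ∈ φ w) →
        ∀ (i j : td.ι) (hi : i ∈ Sw w) (hj : j ∈ Sw w),
        x ∈ td.bag i → y ∈ td.bag j →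
        (td.tree.induce (Sw w)).Reachable ⟨i, hi⟩ ⟨j, hj⟩ := by
      intro x y p
      induction p with
      | @nil x =>
        intro hs i j hi hj hxi hxj
        have hxw : x ∈ φ w := hs x (by simp)
        have hss : {a : td.ι | x ∈ td.bag a} ⊆ Sw w := fun a ha => ⟨x, hxw, ha⟩
        have := reach_induce_mono hss
          ((td.bag_connected x).preconnected ⟨i, hxi⟩ ⟨j, hxj⟩)
        exact this
      | @cons x z y h q ih =>
        intro hs i j hi hj hxi hyj
        obtain ⟨b, hxb, hzb⟩ := td.cover_edge h
        have hxw : x ∈ φ w := hs x (by simp)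
        have hzw : z ∈ φ w := hs z (by simp)
        have hb : b ∈ Sw w := ⟨z, hzw, hzb⟩
        have hss : {a : td.ι | x ∈ td.bag a} ⊆ Sw w := fun a ha => ⟨x, hxw, ha⟩
        have h1 : (td.tree.induce (Sw w)).Reachable ⟨i, hi⟩ ⟨b, hb⟩ :=
          reach_induce_mono hss
            ((td.bag_connected x).preconnected ⟨i, hxi⟩ ⟨b, hxb⟩)
        exact h1.trans (ih (fun z' hz' => hs z' (by simp [hz'])) b j hb hj hzb hyj)
    rw [connected_iff]
    constructor
    · rintro ⟨i, v, hv, hvb⟩ ⟨j, u, hu, hub⟩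
      obtain ⟨p, _, hpS⟩ := exists_path_in_set (hcn w) hv hu
      exact key p hpS i j ⟨v, hv, hvb⟩ ⟨u, hu, hub⟩ hvb hub
    · obtain ⟨v, hv⟩ := hne w
      obtain ⟨i, hi⟩ := td.cover_vertex v
      exact ⟨⟨i, v, hv, hi⟩⟩
  -- the sets pairwise intersect
  have hpair : ∀ w w', w ≠ w' → (Sw w ∩ Sw w').Nonempty := by
    intro w w' hww
    obtain ⟨u, hu, v, hv, huv⟩ := hadj w w' (by simpa using hww)
    obtain ⟨b, hub, hvb⟩ := td.cover_edge huv
    exact ⟨b, ⟨u, hu, hub⟩, ⟨v, hv, hvb⟩⟩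
  obtain ⟨m, hm⟩ := tree_helly4 td.isTree hconn hpair
  -- the common bag has at least 4 vertices
  choose g hg1 hg2 using fun w => hm w
  have hginj : Set.InjOn g ↑(Finset.univ : Finset (Fin 4)) := by
    intro w _ w' _ hgw
    by_contra hne'
    exact Set.disjoint_left.mp (hdis w w' hne') (hg1 w) (hgw ▸ hg1 w')
  have hcard : 4 ≤ (td.bag m).card := by
    have := Finset.card_le_card_of_injOn g (fun w _ => hg2 w) hginj
    simpa using this
  letI := td.fin
  have hsup : 4 ≤ Finset.univ.sup fun i => (td.bag i).card :=
    le_trans hcard (Finset.le_sup (f := fun i => (td.bag i).card) (Finset.mem_univ m))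
  unfold TreeDecomp.width
  omega

lemma three_le_treewidth {V : Type} [Fintype V] {G : SimpleGraph V}
    (h : IsMinor (⊤ : SimpleGraph (Fin 4)) G) : 3 ≤ treewidth G := by
  refine le_csInf ⟨_, ⟨trivialTD G, rfl⟩⟩ ?_
  rintro n ⟨td, rfl⟩
  exact td.three_le_width h

end AuxMain

theorem stmt0 {V : Type} [Fintype V] (G : SimpleGraph V) (hG : G.Connected)
    {k : ℕ} (hk : 2 ≤ k) (L : ContainsLadder G k) (hL : ¬ L.Disconnects) :
    IsMinor (⊤ : SimpleGraph (Fin 4)) G ∧ 3 ≤ treewidth G := by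
  have hminor : IsMinor (⊤ : SimpleGraph (Fin 4)) G := ladder_k4_minor G hG hk L hL
  exact ⟨hminor, three_le_treewidth hminor⟩
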